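/- arXiv:1607.01438 — 3 statements merged into one kernel-verified Lean document; each statement's English description precedes it below -/
import Mathlib

section
/- Let G be a finite connected graph, V₁ ⊂ V₂ nonempty proper subsets of its vertex set, and let S be an equivalence class of the relation ∼_{V₁} on V \ V₁ of minimum cardinality μ(V₁). If V₂ ∩ S is a nonempty proper subset of S, then the minimum cardinality μ(V₂) of an equivalence class of ∼_{V₂} on V \ V₂ is strictly less than μ(V₁). -/
open scoped Classical

variable {V : Type*} [Fintype V] [DecidableEq V]

/-- The equivalence class of `v` under the equal-metric-representation relation
with respect to `S`: all vertices outside `S` whose distance vector to `S`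
agrees with that of `v`. -/
noncomputable def classOf (G : SimpleGraph V) (S : Finset V) (v : V) : Finset V :=
  Finset.univ.filter (fun u => u ∉ S ∧ ∀ w ∈ S, G.dist u w = G.dist v w)

/-- `mu G S` is the minimum cardinality of an equivalence class of the
equal-metric-representation relation on `V \ S`. -/
noncomputable def mu (G : SimpleGraph V) (S : Finset V) : ℕ :=
  sInf {n | ∃ v, v ∉ S ∧ n = (classOf G S v).card}

theorem stmt2 (G : SimpleGraph V) (hG : G.Connected)
    (V₁ V₂ : Finset V) (h1 : V₁.Nonempty) (hsub : V₁ ⊂ V₂)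
    (hproper : V₂ ⊂ Finset.univ)
    (v : V) (hv : v ∉ V₁) (S : Finset V) (hS : S = classOf G V₁ v)
    (hmin : S.card = mu G V₁)
    (hne : (V₂ ∩ S).Nonempty) (hps : V₂ ∩ S ⊂ S) :
    mu G V₂ < mu G V₁ := by
  -- pick u ∈ S \ V₂
  obtain ⟨u, huS, huV₂⟩ : ∃ u, u ∈ S ∧ u ∉ V₂ := by
    obtain ⟨x, hxS, hxn⟩ := Finset.exists_of_ssubset hps
    exact ⟨x, hxS, fun hx => hxn (Finset.mem_inter.mpr ⟨hx, hxS⟩)⟩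
  have huS' := huS
  rw [hS, classOf, Finset.mem_filter] at huS'
  obtain ⟨-, huV₁, hud⟩ := huS'
  have hV₁sub : V₁ ⊆ V₂ := hsub.subset
  -- classOf G V₂ u ⊆ S \ V₂
  have hsub2 : classOf G V₂ u ⊆ S \ V₂ := by
    intro x hx
    rw [classOf, Finset.mem_filter] at hx
    obtain ⟨-, hxV₂, hxd⟩ := hx
    refine Finset.mem_sdiff.mpr ⟨?_, hxV₂⟩
    rw [hS, classOf, Finset.mem_filter]
    refine ⟨Finset.mem_univ _, fun hx1 => hxV₂ (hV₁sub hx1), fun w hw => ?_⟩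
    rw [hxd w (hV₁sub hw), hud w hw]
  have hcard : (classOf G V₂ u).card < S.card := by
    calc (classOf G V₂ u).card ≤ (S \ V₂).card := Finset.card_le_card hsub2
      _ < S.card := by
        apply Finset.card_lt_card
        constructor
        · exact Finset.sdiff_subset
        · intro h
          obtain ⟨y, hy⟩ := hne
          rw [Finset.mem_inter] at hy
          exact (Finset.mem_sdiff.mp (h hy.2)).2 hy.1
  have hle : mu G V₂ ≤ (classOf G V₂ u).card :=
    Nat.sInf_le ⟨u, huV₂, rfl⟩
  omega
end

section
/- Let G be a finite connected graph, V₁ ⊂ V₂ nonempty proper subsets of its vertex set, and let S₁, …, S_ℓ be all the equivalence classes of ∼_{V₁} on V \ V₁ of minimum cardinality μ(V₁). If the union S₁ ∪ ⋯ ∪ S_ℓ is not contained in V₂ \ V₁, then μ(V₂) ≤ μ(V₁). -/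
open scoped Classical

variable {V : Type*} [Fintype V] [DecidableEq V]

theorem stmt3 (G : SimpleGraph V) (hG : G.Connected)
    (V₁ V₂ : Finset V) (h1 : V₁.Nonempty) (hsub : V₁ ⊂ V₂)
    (hproper : V₂ ⊂ Finset.univ)
    (hU : ¬ (V₁ᶜ.filter (fun v => (classOf G V₁ v).card = mu G V₁) ⊆ V₂ \ V₁)) :
    mu G V₂ ≤ mu G V₁ := by
  -- extract a witness v with minimal class not in V₂ \ V₁
  rw [Finset.not_subset] at hU
  obtain ⟨v, hv, hv2⟩ := hU
  rw [Finset.mem_filter, Finset.mem_compl] at hv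
  obtain ⟨hv1, hvcard⟩ := hv
  have hvV2 : v ∉ V₂ := by
    intro h
    exact hv2 (Finset.mem_sdiff.mpr ⟨h, hv1⟩)
  have hsubV : V₁ ⊆ V₂ := hsub.subset
  -- classOf G V₂ v ⊆ classOf G V₁ v
  have hcl : classOf G V₂ v ⊆ classOf G V₁ v := by
    intro u hu
    simp only [classOf, Finset.mem_filter, Finset.mem_univ, true_and] at hu ⊢
    exact ⟨fun h => hu.1 (hsubV h), fun w hw => hu.2 w (hsubV hw)⟩
  have h1 : mu G V₂ ≤ (classOf G V₂ v).card :=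
    Nat.sInf_le ⟨v, hvV2, rfl⟩
  calc mu G V₂ ≤ (classOf G V₂ v).card := h1
    _ ≤ (classOf G V₁ v).card := Finset.card_le_card hcl
    _ = mu G V₁ := hvcard
end

section
/- Let G be a finite connected graph containing no cycle of length 4, and let v_i, v_j be vertices with dist(v_i, v_j) = 2 and let v_ℓ be a common neighbor of v_i and v_j. Then for every vertex v_p ∉ {v_i, v_j, v_ℓ}, the pair (dist(v_p, v_i), dist(v_p, v_j)) differs from (dist(v_ℓ, v_i), dist(v_ℓ, v_j)) = (1, 1). Consequently {v_i, v_j} is a 1-anti-resolving set of G. -/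
open scoped Classical

variable {V : Type*} [Fintype V] [DecidableEq V]

theorem stmt6 (G : SimpleGraph V) (hG : G.Connected)
    (hn : 4 ≤ Fintype.card V)
    (hC4 : ∀ a b c d : V, a ≠ b → a ≠ c → a ≠ d → b ≠ c → b ≠ d → c ≠ d →
      ¬(G.Adj a b ∧ G.Adj b c ∧ G.Adj c d ∧ G.Adj d a))
    (vi vj vl : V) (hij : G.dist vi vj = 2)
    (hli : G.Adj vl vi) (hlj : G.Adj vl vj) :
    (G.dist vl vi = 1 ∧ G.dist vl vj = 1) ∧
    (∀ p, p ≠ vi → p ≠ vj → p ≠ vl → ¬(G.dist p vi = 1 ∧ G.dist p vj = 1)) ∧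
    mu G {vi, vj} = 1 := by
  have hij' : vi ≠ vj := by
    intro h; rw [h, SimpleGraph.dist_self] at hij; omega
  have h1 : G.dist vl vi = 1 := SimpleGraph.dist_eq_one_iff_adj.mpr hli
  have h2 : G.dist vl vj = 1 := SimpleGraph.dist_eq_one_iff_adj.mpr hlj
  have hp : ∀ p, p ≠ vi → p ≠ vj → p ≠ vl →
      ¬(G.dist p vi = 1 ∧ G.dist p vj = 1) := by
    intro p hpi hpj hpl ⟨di, dj⟩
    have ai : G.Adj p vi := SimpleGraph.dist_eq_one_iff_adj.mp di
    have aj : G.Adj p vj := SimpleGraph.dist_eq_one_iff_adj.mp dj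
    exact hC4 vi vl vj p (G.ne_of_adj hli).symm hij' (Ne.symm hpi)
      (G.ne_of_adj hlj) (Ne.symm hpl) (Ne.symm hpj)
      ⟨hli.symm, hlj, aj.symm, ai⟩
  refine ⟨⟨h1, h2⟩, hp, ?_⟩
  have hlS : vl ∉ ({vi, vj} : Finset V) := by
    simp [G.ne_of_adj hli, G.ne_of_adj hlj]
  have hcard : (classOf G {vi, vj} vl).card = 1 := by
    rw [Finset.card_eq_one]
    refine ⟨vl, Finset.eq_singleton_iff_unique_mem.mpr ⟨?_, ?_⟩⟩
    · exact Finset.mem_filter.mpr ⟨Finset.mem_univ _, hlS, fun w _ => rfl⟩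
    · intro u hu
      simp only [classOf, Finset.mem_filter, Finset.mem_univ, true_and,
        Finset.mem_insert, Finset.mem_singleton] at hu
      obtain ⟨huS, hdist⟩ := hu
      by_contra hne
      have hui : u ≠ vi := fun h => huS (Or.inl h)
      have huj : u ≠ vj := fun h => huS (Or.inr h)
      exact hp u hui huj hne
        ⟨(hdist vi (by simp)).trans h1, (hdist vj (by simp)).trans h2⟩
  apply le_antisymm
  · exact Nat.sInf_le ⟨vl, hlS, hcard.symm⟩
  · refine le_csInf ⟨1, vl, hlS, hcard.symm⟩ ?_
    rintro n ⟨v, hv, rfl⟩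
    have : v ∈ classOf G {vi, vj} v := by
      exact Finset.mem_filter.mpr ⟨Finset.mem_univ _, hv, fun w _ => rfl⟩
    exact Finset.card_pos.mpr ⟨v, this⟩
end
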